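/- If A, B, C are subsets of {1,…,d} chosen independently and uniformly at random, then P( 4|A ∩ C| + |B| ≥ 2|A ∩ B| + |A| + 2|C| ) ≤ (65/72)^d. -/

import Mathlib

open Finset

private noncomputable def w13 (b : Bool × Bool × Bool) : ℝ :=
  (3 / 2 : ℝ) ^ (4 * (b.1 && b.2.2).toNat + b.2.1.toNat) *
    (2 / 3 : ℝ) ^ (2 * (b.1 && b.2.1).toNat + b.1.toNat + 2 * b.2.2.toNat)

private lemma w13_nonneg (b : Bool × Bool × Bool) : 0 ≤ w13 b := by
  unfold w13; positivity

private lemma sum_w13 : ∑ b : Bool × Bool × Bool, w13 b = 65 / 9 := by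
  simp [Fintype.sum_prod_type, w13]
  norm_num

theorem stmt_13 (d : ℕ) :
    ((Finset.univ.filter
        (fun t : Finset (Fin d) × Finset (Fin d) × Finset (Fin d) =>
          2 * (t.1 ∩ t.2.1).card + t.1.card + 2 * t.2.2.card
            ≤ 4 * (t.1 ∩ t.2.2).card + t.2.1.card)).card : ℝ) / (8 : ℝ) ^ d
      ≤ (65 / 72 : ℝ) ^ d := by
  set T := Finset (Fin d) × Finset (Fin d) × Finset (Fin d)
  set g : T → ℝ := fun t => ∏ i : Fin d,
    w13 (decide (i ∈ t.1), decide (i ∈ t.2.1), decide (i ∈ t.2.2)) with hg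
  have hgform : ∀ t : T, g t =
      (3 / 2 : ℝ) ^ (4 * (t.1 ∩ t.2.2).card + t.2.1.card) *
        (2 / 3 : ℝ) ^ (2 * (t.1 ∩ t.2.1).card + t.1.card + 2 * t.2.2.card) := by
    intro t
    have hcard : ∀ s : Finset (Fin d), s.card = ∑ i : Fin d, (decide (i ∈ s)).toNat := by
      intro s
      classical
      rw [show s = Finset.univ.filter (· ∈ s) by ext i; simp, Finset.card_filter]
      apply Finset.sum_congr rfl
      intro i _
      by_cases h : i ∈ s <;> simp [h]
    rw [hg]
    simp only [w13]
    rw [Finset.prod_mul_distrib, Finset.prod_pow_eq_pow_sum, Finset.prod_pow_eq_pow_sum]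
    congr 1
    · congr 1
      rw [Finset.sum_add_distrib, ← Finset.mul_sum, hcard (t.1 ∩ t.2.2), hcard t.2.1]
      congr 1
      congr 1
      apply Finset.sum_congr rfl
      intro i _
      simp [Finset.mem_inter]
    · congr 1
      rw [Finset.sum_add_distrib, Finset.sum_add_distrib, ← Finset.mul_sum, ← Finset.mul_sum,
        hcard (t.1 ∩ t.2.1), hcard t.1, hcard t.2.2]
      congr 2
      · congr 1
        apply Finset.sum_congr rfl
        intro i _
        simp [Finset.mem_inter]
  have hsum : ∑ t : T, g t = (65 / 9 : ℝ) ^ d := by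
    have hbij : Function.Bijective
        (fun p : Fin d → Bool × Bool × Bool =>
          ((Finset.univ.filter fun i => (p i).1),
           (Finset.univ.filter fun i => (p i).2.1),
           (Finset.univ.filter fun i => (p i).2.2))) := by
      constructor
      · intro p q h
        funext i
        simp only [Prod.mk.injEq] at h
        obtain ⟨h1, h2, h3⟩ := h
        have e1 : (p i).1 = (q i).1 := by
          have := Finset.ext_iff.mp h1 i; simpa using this
        have e2 : (p i).2.1 = (q i).2.1 := by
          have := Finset.ext_iff.mp h2 i; simpa using this
        have e3 : (p i).2.2 = (q i).2.2 := by
          have := Finset.ext_iff.mp h3 i; simpa using this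
        exact Prod.ext e1 (Prod.ext e2 e3)
      · intro t
        refine ⟨fun i => (decide (i ∈ t.1), decide (i ∈ t.2.1), decide (i ∈ t.2.2)), ?_⟩
        refine Prod.ext ?_ (Prod.ext ?_ ?_) <;> · ext i; simp
    rw [← Function.Bijective.sum_comp hbij g]
    have : ∀ p : Fin d → Bool × Bool × Bool,
        g ((Finset.univ.filter fun i => (p i).1),
           (Finset.univ.filter fun i => (p i).2.1),
           (Finset.univ.filter fun i => (p i).2.2)) = ∏ i, w13 (p i) := by
      intro p
      rw [hg]
      apply Finset.prod_congr rfl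
      intro i _
      congr 1 <;> simp
    rw [Finset.sum_congr rfl fun p _ => this p]
    have := Finset.prod_univ_sum (fun _ : Fin d => (Finset.univ : Finset (Bool × Bool × Bool)))
      (fun _ b => w13 b)
    rw [Fintype.piFinset_univ] at this
    rw [← this]
    simp [sum_w13]
    rw [div_pow]
  set F := Finset.univ.filter
        (fun t : T =>
          2 * (t.1 ∩ t.2.1).card + t.1.card + 2 * t.2.2.card
            ≤ 4 * (t.1 ∩ t.2.2).card + t.2.1.card) with hF
  have hone : ∀ t ∈ F, (1 : ℝ) ≤ g t := by
    intro t ht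
    rw [hF, Finset.mem_filter] at ht
    rw [hgform t]
    set m := 4 * (t.1 ∩ t.2.2).card + t.2.1.card
    set n := 2 * (t.1 ∩ t.2.1).card + t.1.card + 2 * t.2.2.card
    have hmn : n ≤ m := ht.2
    have h23 : (2 / 3 : ℝ) = ((3 / 2 : ℝ))⁻¹ := by norm_num
    rw [h23, inv_pow, ← div_eq_mul_inv, one_le_div (by positivity)]
    exact pow_le_pow_right₀ (by norm_num) hmn
  have hcardle : (F.card : ℝ) ≤ ∑ t : T, g t := by
    calc (F.card : ℝ) = ∑ _t ∈ F, (1 : ℝ) := by simp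
    _ ≤ ∑ t ∈ F, g t := Finset.sum_le_sum hone
    _ ≤ ∑ t : T, g t := Finset.sum_le_sum_of_subset_of_nonneg (Finset.subset_univ F)
        (fun t _ _ => Finset.prod_nonneg fun i _ => w13_nonneg _)
  rw [div_le_iff₀ (by positivity)]
  calc (F.card : ℝ) ≤ (65 / 9 : ℝ) ^ d := hsum ▸ hcardle
  _ = (65 / 72 : ℝ) ^ d * 8 ^ d := by
      rw [← mul_pow]; norm_num
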